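/- arXiv:1805.11699 — 3 statements merged into one kernel-verified Lean document; each statement's English description precedes it below -/
import Mathlib

section
/- Let P0, P1 be symmetric positive definite and Q = I - P0^{-1/2} (P0^{1/2} P1 P0^{1/2})^{1/2} P0^{-1/2}. Then trace(Q P0 Q) = ||P0^{1/2} - P1^{1/2} U||_F^2 where U = P1^{-1/2} P0^{-1/2} (P0^{1/2} P1 P0^{1/2})^{1/2}. -/
open Matrix

/-- The symmetric positive definite square root of a positive definite matrix. -/
noncomputable def sqrtm {n : ℕ} {P : Matrix (Fin n) (Fin n) ℝ} (hP : P.PosDef) :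
    Matrix (Fin n) (Fin n) ℝ :=
  hP.posSemidef.1.eigenvectorUnitary.1 * diagonal ((↑) ∘ (√·) ∘ hP.posSemidef.1.eigenvalues) *
    (star hP.posSemidef.1.eigenvectorUnitary : Matrix (Fin n) (Fin n) ℝ)

/-- Squared Frobenius norm of a real matrix. -/
noncomputable def frobSq {n : ℕ} (M : Matrix (Fin n) (Fin n) ℝ) : ℝ := (M * Mᵀ).trace

lemma sqrtm_mul_self' {n : ℕ} {P : Matrix (Fin n) (Fin n) ℝ} (hP : P.PosDef) :
    sqrtm hP * sqrtm hP = P := by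
  have hu : (star hP.posSemidef.1.eigenvectorUnitary : Matrix (Fin n) (Fin n) ℝ) *
      hP.posSemidef.1.eigenvectorUnitary.1 = 1 := Unitary.star_mul_self_of_mem hP.posSemidef.1.eigenvectorUnitary.2
  have hd : diagonal ((↑) ∘ (√·) ∘ hP.posSemidef.1.eigenvalues) *
      diagonal ((↑) ∘ (√·) ∘ hP.posSemidef.1.eigenvalues) =
      diagonal (RCLike.ofReal ∘ hP.posSemidef.1.eigenvalues : Fin n → ℝ) := by
    rw [diagonal_mul_diagonal]
    congr 1
    funext i
    simp [Real.mul_self_sqrt (hP.posSemidef.eigenvalues_nonneg i)]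
  conv_rhs => rw [hP.posSemidef.1.spectral_theorem]
  rw [Unitary.conjStarAlgAut_apply, sqrtm, ← hd]
  simp only [Matrix.mul_assoc]
  rw [← Matrix.mul_assoc _ _ (diagonal _ * _), hu, Matrix.one_mul]

lemma sqrtm_isUnit_det {n : ℕ} {P : Matrix (Fin n) (Fin n) ℝ} (hP : P.PosDef) :
    IsUnit (sqrtm hP).det := by
  have h := sqrtm_mul_self' hP
  have hdet : (sqrtm hP).det * (sqrtm hP).det = P.det := by
    rw [← det_mul, h]
  refine isUnit_iff_ne_zero.2 (fun hz => ?_)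
  rw [hz, mul_zero] at hdet
  exact (ne_of_gt hP.det_pos) hdet.symm

lemma sqrtm_transpose {n : ℕ} {P : Matrix (Fin n) (Fin n) ℝ} (hP : P.PosDef) :
    (sqrtm hP)ᵀ = sqrtm hP := by
  simp [sqrtm, transpose_mul, star_eq_conjTranspose, conjTranspose_eq_transpose_of_trivial, Matrix.mul_assoc]

theorem stmt_5 {n : ℕ} {P0 P1 : Matrix (Fin n) (Fin n) ℝ}
    (hP0 : P0.PosDef) (hP1 : P1.PosDef)
    (hS : (sqrtm hP0 * P1 * sqrtm hP0).PosDef)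
    (U : Matrix (Fin n) (Fin n) ℝ)
    (hU : U = (sqrtm hP1)⁻¹ * (sqrtm hP0)⁻¹ * sqrtm hS)
    (Q : Matrix (Fin n) (Fin n) ℝ)
    (hQ : Q = 1 - (sqrtm hP0)⁻¹ * sqrtm hS * (sqrtm hP0)⁻¹) :
    (Q * P0 * Q).trace = frobSq (sqrtm hP0 - sqrtm hP1 * U) := by
  set A := sqrtm hP0 with hA
  set S := sqrtm hS with hSdef
  set B := sqrtm hP1 with hB
  have hAu : IsUnit A.det := sqrtm_isUnit_det hP0
  have hBu : IsUnit B.det := sqrtm_isUnit_det hP1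
  have hAt : Aᵀ = A := sqrtm_transpose hP0
  have hSt : Sᵀ = S := sqrtm_transpose hS
  have hA2 : A * A = P0 := sqrtm_mul_self' hP0
  have hBU : B * U = A⁻¹ * S := by
    rw [hU, ← Matrix.mul_assoc, ← Matrix.mul_assoc,
      Matrix.mul_nonsing_inv _ hBu, Matrix.one_mul]
  have hMT : (A - B * U)ᵀ = A - S * A⁻¹ := by
    rw [hBU, transpose_sub, hAt, transpose_mul, hSt, transpose_nonsing_inv, hAt]
  have key : Q * P0 * Q = (A - B * U) * (A - B * U)ᵀ := by
    rw [hMT, hBU, hQ]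
    simp only [← hA]
    rw [← hA2]
    have h1 : A⁻¹ * A = 1 := Matrix.nonsing_inv_mul _ hAu
    have h2 : A * A⁻¹ = 1 := Matrix.mul_nonsing_inv _ hAu
    simp only [Matrix.sub_mul, Matrix.mul_sub, Matrix.one_mul, Matrix.mul_one,
      Matrix.mul_assoc, Matrix.nonsing_inv_mul_cancel_left A _ hAu,
      Matrix.mul_nonsing_inv_cancel_left A _ hAu]
  rw [key, frobSq]
end

section
/- For a symmetric positive definite matrix P and real matrix A, trace(P^{-1} A P A') - trace(A A) = (1/2) ||P^{-1/2} A P^{1/2} - P^{1/2} A' P^{-1/2}||_F^2. In particular, equality trace(P^{-1} A P A') = trace(A A) holds if and only if P^{-1/2} A P^{1/2} is symmetric. -/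
open Matrix

lemma frobSq_eq_sum {n : ℕ} (M : Matrix (Fin n) (Fin n) ℝ) :
    frobSq M = ∑ i, ∑ j, M i j ^ 2 := by
  simp [frobSq, Matrix.trace, Matrix.mul_apply, Matrix.diag, sq]

lemma frobSq_eq_zero_iff {n : ℕ} (M : Matrix (Fin n) (Fin n) ℝ) :
    frobSq M = 0 ↔ M = 0 := by
  rw [frobSq_eq_sum]
  constructor
  · intro h
    ext i j
    have h1 := (Finset.sum_eq_zero_iff_of_nonneg (fun i _ =>
      Finset.sum_nonneg fun j _ => sq_nonneg (M i j))).mp h i (Finset.mem_univ i)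
    have h2 := (Finset.sum_eq_zero_iff_of_nonneg (fun j _ =>
      sq_nonneg (M i j))).mp h1 j (Finset.mem_univ j)
    simpa using pow_eq_zero_iff (n := 2) (by norm_num) |>.mp h2
  · intro h; simp [h]

theorem stmt_10 {n : ℕ} {P : Matrix (Fin n) (Fin n) ℝ} (hP : P.PosDef)
    (A : Matrix (Fin n) (Fin n) ℝ) :
    (P⁻¹ * A * P * Aᵀ).trace - (A * A).trace =
      (1 / 2 : ℝ) * frobSq ((sqrtm hP)⁻¹ * A * sqrtm hP - sqrtm hP * Aᵀ * (sqrtm hP)⁻¹) ∧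
    ((P⁻¹ * A * P * Aᵀ).trace = (A * A).trace ↔ ((sqrtm hP)⁻¹ * A * sqrtm hP).IsSymm) := by
  set S := sqrtm hP with hSdef
  have hSS : S * S = P := by
    have hU : (star hP.posSemidef.1.eigenvectorUnitary : Matrix (Fin n) (Fin n) ℝ) *
        hP.posSemidef.1.eigenvectorUnitary.1 = 1 := Unitary.coe_star_mul_self _
    have hD : diagonal (((↑) ∘ (√·) ∘ hP.posSemidef.1.eigenvalues : Fin n → ℝ)) *
        diagonal (((↑) ∘ (√·) ∘ hP.posSemidef.1.eigenvalues : Fin n → ℝ)) =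
        diagonal (RCLike.ofReal ∘ hP.posSemidef.1.eigenvalues) := by
      rw [diagonal_mul_diagonal]; congr 1; ext i
      simp [Real.mul_self_sqrt (hP.posSemidef.eigenvalues_nonneg i)]
    conv_rhs => rw [hP.posSemidef.1.spectral_theorem, Unitary.conjStarAlgAut_apply]
    rw [hSdef, sqrtm]
    calc _ = hP.posSemidef.1.eigenvectorUnitary.1 * diagonal (((↑) ∘ (√·) ∘ hP.posSemidef.1.eigenvalues : Fin n → ℝ)) *
          ((star hP.posSemidef.1.eigenvectorUnitary : Matrix (Fin n) (Fin n) ℝ) *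
        hP.posSemidef.1.eigenvectorUnitary.1) * diagonal (((↑) ∘ (√·) ∘ hP.posSemidef.1.eigenvalues : Fin n → ℝ)) *
          (star hP.posSemidef.1.eigenvectorUnitary : Matrix (Fin n) (Fin n) ℝ) := by
            simp only [Matrix.mul_assoc]
      _ = _ := by rw [hU, Matrix.mul_one, Matrix.mul_assoc _ (diagonal _) (diagonal _), hD]
  have hSh : Sᵀ = S := by
    simp [hSdef, sqrtm, Matrix.transpose_mul, Matrix.mul_assoc, Matrix.star_eq_conjTranspose]
  have hdet : IsUnit S.det := by
    have h1 : S.det * S.det = P.det := by rw [← Matrix.det_mul, hSS]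
    have h2 : (0:ℝ) < P.det := hP.det_pos
    refine isUnit_iff_ne_zero.mpr fun h => ?_
    rw [h, mul_zero] at h1; rw [← h1] at h2; exact lt_irrefl _ h2
  have hSinv : S * S⁻¹ = 1 := Matrix.mul_nonsing_inv S hdet
  have hSinv' : S⁻¹ * S = 1 := Matrix.nonsing_inv_mul S hdet
  have hPinv : P⁻¹ = S⁻¹ * S⁻¹ := by rw [← hSS, Matrix.mul_inv_rev]
  set B := S⁻¹ * A * S with hB
  have hBt : Bᵀ = S * Aᵀ * S⁻¹ := by
    rw [hB, Matrix.transpose_mul, Matrix.transpose_mul, hSh,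
      Matrix.transpose_nonsing_inv, hSh, Matrix.mul_assoc]
  have t1 : (P⁻¹ * A * P * Aᵀ).trace = (B * Bᵀ).trace := by
    rw [hPinv, ← hSS, hB, hBt]
    calc (S⁻¹ * S⁻¹ * A * (S * S) * Aᵀ).trace
        = (S⁻¹ * (S⁻¹ * A * (S * S) * Aᵀ)).trace := by
          rw [show S⁻¹ * S⁻¹ * A * (S * S) * Aᵀ = S⁻¹ * (S⁻¹ * A * (S * S) * Aᵀ) by
            simp [Matrix.mul_assoc]]
      _ = ((S⁻¹ * A * (S * S) * Aᵀ) * S⁻¹).trace := Matrix.trace_mul_comm _ _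
      _ = (S⁻¹ * A * S * (S * Aᵀ * S⁻¹)).trace := by
          rw [show (S⁻¹ * A * (S * S) * Aᵀ) * S⁻¹ = S⁻¹ * A * S * (S * Aᵀ * S⁻¹) by
            simp [Matrix.mul_assoc]]
  have t2 : (A * A).trace = (B * B).trace := by
    rw [hB]
    have e1 : S⁻¹ * A * S * (S⁻¹ * A * S) = S⁻¹ * (A * (A * S)) := by
      simp only [Matrix.mul_assoc]
      rw [show S * (S⁻¹ * (A * S)) = A * S by rw [← Matrix.mul_assoc, hSinv, Matrix.one_mul]]
    rw [e1, Matrix.trace_mul_comm S⁻¹]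
    rw [show (A * (A * S)) * S⁻¹ = A * A by
      simp [Matrix.mul_assoc, hSinv]]
  have expand : frobSq (B - Bᵀ) =
      2 * ((B * Bᵀ).trace - (B * B).trace) := by
    have h1 : (Bᵀ * Bᵀ).trace = (B * B).trace := by
      rw [← Matrix.transpose_mul, Matrix.trace_transpose]
    have h2 : (Bᵀ * B).trace = (B * Bᵀ).trace := Matrix.trace_mul_comm _ _
    simp only [frobSq, Matrix.transpose_sub, Matrix.transpose_transpose,
      Matrix.sub_mul, Matrix.mul_sub, Matrix.trace_sub]
    rw [h1, h2]; ring
  have hfrob : (P⁻¹ * A * P * Aᵀ).trace - (A * A).trace = (1/2 : ℝ) * frobSq (B - Bᵀ) := by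
    rw [t1, t2, expand]; ring
  have hMeq : S⁻¹ * A * S - S * Aᵀ * S⁻¹ = B - Bᵀ := by rw [hB, hBt]
  refine ⟨by rw [hMeq]; exact hfrob, ?_⟩
  have key : (P⁻¹ * A * P * Aᵀ).trace = (A * A).trace ↔ frobSq (B - Bᵀ) = 0 := by
    rw [← sub_eq_zero, hfrob]
    constructor
    · intro h; linarith
    · intro h; rw [h]; ring
  rw [key, frobSq_eq_zero_iff]
  exact ⟨fun h => (sub_eq_zero.mp h).symm, fun h => sub_eq_zero.mpr h.symm⟩
end

section
/- Given SPD matrices P0, P1, the equation exp(-P0 Π) P0 exp(-Π P0) = P1 has the unique symmetric solution Π = -(1/2) P0^{-1/2} log(P0^{-1/2} P1 P0^{-1/2}) P0^{-1/2}. -/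
open Matrix

lemma exp_inj_of_selfAdjoint {n : ℕ} {A B : Matrix (Fin n) (Fin n) ℝ}
    (hA : _root_.IsSelfAdjoint A) (hB : _root_.IsSelfAdjoint B)
    (h : NormedSpace.exp A = NormedSpace.exp B) : A = B := by
  letI : NormedRing (Matrix (Fin n) (Fin n) ℝ) := Matrix.instL2OpNormedRing
  letI : NormedAlgebra ℝ (Matrix (Fin n) (Fin n) ℝ) := Matrix.instL2OpNormedAlgebra
  have h1 := CFC.log_exp A hA
  rw [h, CFC.log_exp B hB] at h1
  exact h1.symm

lemma isSelfAdjoint_of_isSymm {n : ℕ} {A : Matrix (Fin n) (Fin n) ℝ} (h : A.IsSymm) :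
    _root_.IsSelfAdjoint A := by
  show star A = A
  rw [Matrix.star_eq_conjTranspose, Matrix.conjTranspose_eq_transpose_of_trivial]
  exact h

theorem stmt_16 {n : ℕ} {P0 P1 : Matrix (Fin n) (Fin n) ℝ}
    (hP0 : P0.PosDef) (hP1 : P1.PosDef)
    (L : Matrix (Fin n) (Fin n) ℝ) (hL : L.IsSymm)
    (hexpL : NormedSpace.exp L = (sqrtm hP0)⁻¹ * P1 * (sqrtm hP0)⁻¹)
    (Pi0 : Matrix (Fin n) (Fin n) ℝ)
    (hPi0 : Pi0 = -(1 / 2 : ℝ) • ((sqrtm hP0)⁻¹ * L * (sqrtm hP0)⁻¹)) :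
    (Pi0.IsSymm ∧
      NormedSpace.exp (-(P0 * Pi0)) * P0 * NormedSpace.exp (-(Pi0 * P0)) = P1) ∧
    ∀ Pi1 : Matrix (Fin n) (Fin n) ℝ, Pi1.IsSymm →
      NormedSpace.exp (-(P0 * Pi1)) * P0 * NormedSpace.exp (-(Pi1 * P0)) = P1 →
      Pi1 = Pi0 := by
  set S := sqrtm hP0 with hSdef
  have hSS : S * S = P0 := by
    have hsu := Unitary.star_mul_self_of_mem hP0.posSemidef.1.eigenvectorUnitary.2
    have hev : ∀ i, 0 ≤ hP0.posSemidef.1.eigenvalues i := fun i => (hP0.eigenvalues_pos i).le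
    conv_rhs => rw [hP0.posSemidef.1.spectral_theorem]
    rw [Unitary.conjStarAlgAut_apply, hSdef, sqrtm]
    simp only [Matrix.mul_assoc]
    rw [← Matrix.mul_assoc (star _) _ _, hsu, Matrix.one_mul,
      ← Matrix.mul_assoc (diagonal _) (diagonal _), diagonal_mul_diagonal]
    congr 3
    funext i
    simp [Real.mul_self_sqrt (hev i)]
  have hSherm : S.IsHermitian := by
    rw [hSdef]
    simp [IsHermitian, sqrtm, Matrix.mul_assoc, star_eq_conjTranspose,
      conjTranspose_eq_transpose_of_trivial]
  have hSsymm : Sᵀ = S := hSherm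
  have hdet : IsUnit S.det := by
    have h2 : S.det * S.det = P0.det := by rw [← Matrix.det_mul, hSS]
    have : S.det ≠ 0 := by
      intro h0
      rw [h0, mul_zero] at h2
      exact hP0.det_pos.ne' h2.symm
    exact this.isUnit
  have hUS : IsUnit S := (Matrix.isUnit_iff_isUnit_det S).2 hdet
  have hSinvsymm : (S⁻¹)ᵀ = S⁻¹ := by rw [Matrix.transpose_nonsing_inv, hSsymm]
  -- sandwich cancellations
  have sand : ∀ X : Matrix (Fin n) (Fin n) ℝ, S * (S⁻¹ * X * S⁻¹) * S = X := by
    intro X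
    rw [Matrix.mul_assoc S⁻¹ X S⁻¹, Matrix.mul_nonsing_inv_cancel_left _ _ hdet,
      Matrix.nonsing_inv_mul_cancel_right _ _ hdet]
  have sand' : ∀ X : Matrix (Fin n) (Fin n) ℝ, S⁻¹ * (S * X * S) * S⁻¹ = X := by
    intro X
    rw [Matrix.mul_assoc S X S, Matrix.nonsing_inv_mul_cancel_left _ _ hdet,
      Matrix.mul_nonsing_inv_cancel_right _ _ hdet]
  -- key conjugation identity
  have key : ∀ Pi : Matrix (Fin n) (Fin n) ℝ,
      NormedSpace.exp (-(P0 * Pi)) * P0 * NormedSpace.exp (-(Pi * P0))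
        = S * NormedSpace.exp (-(S * Pi * S) + -(S * Pi * S)) * S := by
    intro Pi
    have e1 : S * (S * Pi * S) * S⁻¹ = P0 * Pi := by
      rw [Matrix.mul_assoc S (S * Pi * S) S⁻¹, Matrix.mul_nonsing_inv_cancel_right _ _ hdet,
        ← Matrix.mul_assoc, hSS]
    have e2 : S⁻¹ * (S * Pi * S) * S = Pi * P0 := by
      rw [Matrix.mul_assoc S Pi S, Matrix.nonsing_inv_mul_cancel_left _ _ hdet,
        Matrix.mul_assoc, hSS]
    have c1 : -(P0 * Pi) = S * (-(S * Pi * S)) * S⁻¹ := by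
      rw [Matrix.mul_neg, Matrix.neg_mul, e1]
    have c2 : -(Pi * P0) = S⁻¹ * (-(S * Pi * S)) * S := by
      rw [Matrix.mul_neg, Matrix.neg_mul, e2]
    rw [c1, c2, Matrix.exp_conj S _ hUS, Matrix.exp_conj' S _ hUS,
      Matrix.exp_add_of_commute _ _ (Commute.refl _), ← hSS]
    generalize NormedSpace.exp (-(S * Pi * S)) = E
    simp only [Matrix.mul_assoc, Matrix.nonsing_inv_mul_cancel_left _ _ hdet,
      Matrix.mul_nonsing_inv_cancel_left _ _ hdet]
  -- relation between Pi0 and L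
  have hSPi0S : -(S * Pi0 * S) + -(S * Pi0 * S) = L := by
    rw [hPi0, Matrix.mul_smul, Matrix.smul_mul, sand L, ← neg_smul]
    module
  -- existence
  have existence : NormedSpace.exp (-(P0 * Pi0)) * P0 * NormedSpace.exp (-(Pi0 * P0)) = P1 := by
    rw [key Pi0, hSPi0S, hexpL, sand P1]
  have hPi0symm : Pi0.IsSymm := by
    rw [hPi0, Matrix.IsSymm, Matrix.transpose_smul, Matrix.transpose_mul, Matrix.transpose_mul,
      hSinvsymm, hL.eq, ← Matrix.mul_assoc]
  refine ⟨⟨hPi0symm, existence⟩, fun Pi1 hPi1 heq => ?_⟩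
  rw [key Pi1] at heq
  -- deduce exp equality
  have hexp1 : NormedSpace.exp (-(S * Pi1 * S) + -(S * Pi1 * S)) = NormedSpace.exp L := by
    rw [hexpL, ← heq, sand']
  have hPi1S : (S * Pi1 * S)ᵀ = S * Pi1 * S := by
    rw [Matrix.transpose_mul, Matrix.transpose_mul, hSsymm, hPi1.eq, ← Matrix.mul_assoc]
  have hselfadj : _root_.IsSelfAdjoint (-(S * Pi1 * S) + -(S * Pi1 * S)) := by
    have h1 : _root_.IsSelfAdjoint (S * Pi1 * S) := isSelfAdjoint_of_isSymm hPi1S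
    exact h1.neg.add h1.neg
  have hML : -(S * Pi1 * S) + -(S * Pi1 * S) = L :=
    exp_inj_of_selfAdjoint hselfadj (isSelfAdjoint_of_isSymm hL) hexp1
  -- conclude Pi1 = Pi0
  have hS1 : S * Pi1 * S = -(1 / 2 : ℝ) • L := by
    rw [← hML]
    module
  have hPi1eq : Pi1 = S⁻¹ * (S * Pi1 * S) * S⁻¹ := (sand' Pi1).symm
  rw [hPi1eq, hS1, hPi0, Matrix.mul_smul, Matrix.smul_mul]
end
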